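/- Let X be a metric space and G a group of isometries of X. Every infinite rigid subset K ⊆ X of cardinality |K| ≥ |G| is kaleidoscopical: there exists a coloring χ : X → C (a surjection onto a set C of cardinality |K|) whose restriction to g(K) is a bijection onto C for every g ∈ G. -/

import Mathlib

universe u

/-- The distance scale `d(K × K) = {d(a,b) : a, b ∈ K}` of a subset of a metric space. -/
def DistSet {X : Type u} [MetricSpace X] (K : Set X) : Set ℝ :=
  {r : ℝ | ∃ a ∈ K, ∃ b ∈ K, dist a b = r}

/-- A subset `K` of a metric space is rigid if for any pairwise distinct `x, y, z ∈ K`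
and any `r_x, r_y, r_z ∈ d(K × K)` the spheres `S(x,r_x)`, `S(y,r_y)`, `S(z,r_z)` have no
common point outside `K`. -/
def Rigid {X : Type u} [MetricSpace X] (K : Set X) : Prop :=
  ∀ x ∈ K, ∀ y ∈ K, ∀ z ∈ K, x ≠ y → y ≠ z → x ≠ z →
    ∀ rx ∈ DistSet K, ∀ ry ∈ DistSet K, ∀ rz ∈ DistSet K,
      ∀ p, p ∉ K → ¬(dist p x = rx ∧ dist p y = ry ∧ dist p z = rz)

namespace Stmt13

open Cardinal Set

variable {X : Type u} [MetricSpace X]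

/-- Key consequence of rigidity: a point outside `K` is at `DistSet K`-distance from
at most two points of `K`. -/
theorem rigid_two {K : Set X} (h : Rigid K) {p : X} (hp : p ∉ K) :
    ∃ a b : X, {x : X | x ∈ K ∧ dist p x ∈ DistSet K} ⊆ {a, b} := by
  set Z := {x : X | x ∈ K ∧ dist p x ∈ DistSet K} with hZ
  have tri : ∀ x ∈ Z, ∀ y ∈ Z, ∀ z ∈ Z, x = y ∨ y = z ∨ x = z := by
    intro x hx y hy z hz
    by_contra hc
    push_neg at hc
    obtain ⟨hxy, hyz, hxz⟩ := hc
    exact h x hx.1 y hy.1 z hz.1 hxy hyz hxz _ hx.2 _ hy.2 _ hz.2 p hp ⟨rfl, rfl, rfl⟩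
  by_cases hne : ∃ a, a ∈ Z
  · obtain ⟨a, ha⟩ := hne
    by_cases h2 : ∃ b ∈ Z, b ≠ a
    · obtain ⟨b, hb, hba⟩ := h2
      refine ⟨a, b, fun z hz => ?_⟩
      rcases tri a ha z hz b hb with h1 | h1 | h1
      · exact Or.inl h1.symm
      · exact Or.inr h1
      · exact absurd h1.symm hba
    · push_neg at h2
      exact ⟨a, a, fun z hz => Or.inl (h2 z hz)⟩
  · push_neg at hne
    exact ⟨p, p, fun z hz => absurd hz (hne z)⟩

variable (G : Subgroup (X ≃ᵢ X)) (K : Set X)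

/-- Two points are linked if they both belong to `g '' K` for some `g ∈ G`. -/
def lnk (p q : X) : Prop :=
  ∃ g : G, p ∈ (g : X ≃ᵢ X) '' K ∧ q ∈ (g : X ≃ᵢ X) '' K

/-- A point/color pair is safe w.r.t. a partial coloring `D`: the point is uncolored and
no linked point carries the color. -/
def Safe (D : Set (X × ↥K)) (p : X) (c : ↥K) : Prop :=
  (∀ c', (p, c') ∉ D) ∧ ∀ q c', (q, c') ∈ D → lnk G K p q → c' ≠ c

/-- Tasks for the transfinite recursion: color a point of the union, or make a color
appear on `g '' K`. -/
abbrev Task : Type u := ↥(⋃ g : G, (g : X ≃ᵢ X) '' K) ⊕ (↥G × ↥K)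

open Classical in
/-- One step of the recursion, given the accumulated partial coloring `D`. -/
noncomputable def body (D : Set (X × ↥K)) : Task G K → Option (X × ↥K)
  | Sum.inl p => if h : ∃ c, Safe G K D p.1 c then some (p.1, h.choose) else none
  | Sum.inr gk =>
      if h : ∃ x, x ∈ ((gk.1 : X ≃ᵢ X)) '' K ∧ Safe G K D x gk.2 then
        some (h.choose, gk.2)
      else none

variable {ι : Type u} [LinearOrder ι] [WellFoundedLT ι]

/-- The transfinite recursion: at stage `i` perform the task `e i`. -/
noncomputable def step (e : ι → Task G K) : ι → Option (X × ↥K) :=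
  (IsWellFounded.wf (α := ι) (r := (· < ·))).fix fun i F =>
    body G K {pc | ∃ j, ∃ _h : j < i, F j ‹_› = some pc} (e i)

/-- The coloring accumulated before stage `i`. -/
def Dset (e : ι → Task G K) (i : ι) : Set (X × ↥K) :=
  {pc | ∃ j, ∃ _h : j < i, step G K e j = some pc}

theorem step_eq (e : ι → Task G K) (i : ι) :
    step G K e i = body G K (Dset G K e i) (e i) :=
  WellFounded.fix_eq _ _ i

theorem step_mem_safe {e : ι → Task G K} {i : ι} {p : X} {c : ↥K}
    (h : step G K e i = some (p, c)) : Safe G K (Dset G K e i) p c := by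
  rw [step_eq] at h
  rcases he : e i with q | gk <;> rw [he] at h <;> simp only [body] at h
  · split at h
    · rename_i h'
      rw [Option.some.injEq, Prod.mk.injEq] at h
      obtain ⟨hp, hc⟩ := h
      subst hp; subst hc
      exact h'.choose_spec
    · simp at h
  · split at h
    · rename_i h'
      rw [Option.some.injEq, Prod.mk.injEq] at h
      obtain ⟨hp, hc⟩ := h
      subst hp; subst hc
      exact h'.choose_spec.2
    · simp at h

theorem step_point_unique {e : ι → Task G K} {i j : ι} {p : X} {c c' : ↥K}
    (hi : step G K e i = some (p, c)) (hj : step G K e j = some (p, c')) :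
    i = j ∧ c = c' := by
  rcases lt_trichotomy i j with h | h | h
  · exact absurd (Set.mem_setOf.2 ⟨i, h, hi⟩) ((step_mem_safe G K hj).1 c)
  · subst h
    rw [hi] at hj
    exact ⟨rfl, (Prod.mk.injEq .. ▸ Option.some.injEq _ _ ▸ hj).2⟩
  · exact absurd (Set.mem_setOf.2 ⟨j, h, hj⟩) ((step_mem_safe G K hi).1 c')

open Classical in
/-- The final coloring. -/
noncomputable def chi (e : ι → Task G K) (c₀ : ↥K) (x : X) : ↥K :=
  if h : ∃ ic : ι × ↥K, step G K e ic.1 = some (x, ic.2) then h.choose.2 else c₀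

theorem chi_eq {e : ι → Task G K} {c₀ : ↥K} {i : ι} {x : X} {c : ↥K}
    (h : step G K e i = some (x, c)) : chi G K e c₀ x = c := by
  have hex : ∃ ic : ι × ↥K, step G K e ic.1 = some (x, ic.2) := ⟨(i, c), h⟩
  rw [chi, dif_pos hex]
  exact (step_point_unique G K hex.choose_spec h).2

theorem step_of_inl {e : ι → Task G K} {i : ι} {q : ↥(⋃ g : G, (g : X ≃ᵢ X) '' K)}
    (he : e i = Sum.inl q) (h : ∃ c, Safe G K (Dset G K e i) q.1 c) :
    ∃ c, step G K e i = some (q.1, c) := by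
  rw [step_eq, he]
  simp only [body]
  rw [dif_pos h]
  exact ⟨h.choose, rfl⟩

theorem step_of_inr {e : ι → Task G K} {i : ι} {g : ↥G} {k : ↥K}
    (he : e i = Sum.inr (g, k))
    (h : ∃ x, x ∈ (g : X ≃ᵢ X) '' K ∧ Safe G K (Dset G K e i) x k) :
    ∃ x ∈ (g : X ≃ᵢ X) '' K, step G K e i = some (x, k) := by
  rw [step_eq, he]
  simp only [body]
  rw [dif_pos h]
  exact ⟨h.choose, h.choose_spec.1, rfl⟩

theorem point_colored {e : ι → Task G K} {i : ι} {p : ↥(⋃ g : G, (g : X ≃ᵢ X) '' K)}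
    (he : e i = Sum.inl p) (hsmall : Cardinal.mk (Dset G K e i) < Cardinal.mk K) :
    ∃ j c, step G K e j = some (p.1, c) := by
  classical
  by_cases hcol : ∃ j c, step G K e j = some (p.1, c)
  · exact hcol
  · have hUle : Cardinal.mk {c : ↥K | ∃ q, (q, c) ∈ Dset G K e i} ≤
        Cardinal.mk (Dset G K e i) := by
      refine Cardinal.mk_le_of_injective (f := fun c : {c : ↥K | ∃ q, (q, c) ∈ Dset G K e i} =>
        (⟨(c.2.choose, c.1), c.2.choose_spec⟩ : ↥(Dset G K e i))) ?_
      intro a b hab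
      exact Subtype.ext (congrArg (fun z : ↥(Dset G K e i) => z.1.2) hab)
    have hUlt := hUle.trans_lt hsmall
    have hUne : {c : ↥K | ∃ q, (q, c) ∈ Dset G K e i} ≠ Set.univ := by
      intro hU
      rw [hU, Cardinal.mk_univ] at hUlt
      exact lt_irrefl _ hUlt
    obtain ⟨c, hc⟩ := (Set.ne_univ_iff_exists_notMem _).1 hUne
    have hsafe : Safe G K (Dset G K e i) p.1 c := by
      constructor
      · intro c' hc'
        obtain ⟨j, hj, hstep⟩ := hc'
        exact hcol ⟨j, c', hstep⟩
      · intro q c' hq _ hceq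
        exact hc ⟨q, hceq ▸ hq⟩
    obtain ⟨c', hstep⟩ := step_of_inl G K he ⟨c, hsafe⟩
    exact ⟨i, c', hstep⟩

theorem color_hit {e : ι → Task G K} {i : ι} {g : ↥G} {k : ↥K}
    (he : e i = Sum.inr (g, k)) (hsmall : Cardinal.mk (Dset G K e i) < Cardinal.mk K)
    (hinf : K.Infinite) (hrigid : Rigid K) :
    ∃ x ∈ (g : X ≃ᵢ X) '' K, ∃ j, step G K e j = some (x, k) := by
  classical
  by_cases hdone : ∃ q ∈ (g : X ≃ᵢ X) '' K, (q, k) ∈ Dset G K e i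
  · obtain ⟨q, hqg, j, hj, hstep⟩ := hdone
    exact ⟨q, hqg, j, hstep⟩
  · push_neg at hdone
    haveI := hinf.to_subtype
    have hκ : Cardinal.aleph0 ≤ Cardinal.mk ↥K := Cardinal.aleph0_le_mk _
    have hDomlt : Cardinal.mk {x : X | ∃ c', (x, c') ∈ Dset G K e i} < Cardinal.mk ↥K := by
      refine lt_of_le_of_lt (Cardinal.mk_le_of_injective
        (f := fun x : {x : X | ∃ c', (x, c') ∈ Dset G K e i} =>
          (⟨(x.1, x.2.choose), x.2.choose_spec⟩ : ↥(Dset G K e i))) ?_) hsmall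
      intro a b hab
      exact Subtype.ext (congrArg (fun z : ↥(Dset G K e i) => z.1.1) hab)
    have hQlt : Cardinal.mk {q : X | (q, k) ∈ Dset G K e i} < Cardinal.mk ↥K := by
      refine lt_of_le_of_lt (Cardinal.mk_le_of_injective
        (f := fun q : {q : X | (q, k) ∈ Dset G K e i} =>
          (⟨(q.1, k), q.2⟩ : ↥(Dset G K e i))) ?_) hsmall
      intro a b hab
      exact Subtype.ext (congrArg (fun z : ↥(Dset G K e i) => z.1.1) hab)
    have key : ∀ q : {q : X | (q, k) ∈ Dset G K e i}, ∃ a b : X,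
        {x | x ∈ (g : X ≃ᵢ X) '' K ∧ lnk G K x q.1} ⊆ {a, b} := by
      rintro ⟨q, hq⟩
      have hqg : q ∉ (g : X ≃ᵢ X) '' K := fun hm => hdone q hm hq
      have hq'K : (g : X ≃ᵢ X).symm q ∉ K := by
        intro hm
        exact hqg ⟨(g : X ≃ᵢ X).symm q, hm, (g : X ≃ᵢ X).apply_symm_apply q⟩
      obtain ⟨a, b, hab⟩ := rigid_two hrigid hq'K
      refine ⟨(g : X ≃ᵢ X) a, (g : X ≃ᵢ X) b, ?_⟩
      rintro x ⟨⟨x0, hx0, rfl⟩, h', ⟨u, hu, hup⟩, v, hv, hvq⟩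
      have hd : dist ((g : X ≃ᵢ X).symm q) x0 ∈ DistSet K := by
        have e1 : dist ((g : X ≃ᵢ X).symm q) x0 = dist q ((g : X ≃ᵢ X) x0) := by
          conv_rhs => rw [← (g : X ≃ᵢ X).apply_symm_apply q]
          rw [(g : X ≃ᵢ X).dist_eq]
        replace hvq : (h' : X ≃ᵢ X) v = q := hvq
        have e2 : dist q ((g : X ≃ᵢ X) x0) = dist v u := by
          rw [← hvq, ← hup, (h' : X ≃ᵢ X).dist_eq]
        exact ⟨v, hv, u, hu, (e1.trans e2).symm⟩
      have h2 := hab ⟨hx0, hd⟩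
      simp only [Set.mem_insert_iff, Set.mem_singleton_iff] at h2 ⊢
      rcases h2 with h1 | h1
      · exact Or.inl (by rw [h1])
      · exact Or.inr (by rw [h1])
    choose A B hAB using key
    have hRlt : Cardinal.mk ↥(Set.range A ∪ Set.range B : Set X) < Cardinal.mk ↥K := by
      refine lt_of_le_of_lt (Cardinal.mk_union_le _ _) ?_
      exact Cardinal.add_lt_of_lt hκ (Cardinal.mk_range_le.trans_lt hQlt)
        (Cardinal.mk_range_le.trans_lt hQlt)
    by_cases hs : ∃ x, x ∈ (g : X ≃ᵢ X) '' K ∧ Safe G K (Dset G K e i) x k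
    · obtain ⟨x, hxg, hstep⟩ := step_of_inr G K he hs
      exact ⟨x, hxg, i, hstep⟩
    · exfalso
      push_neg at hs
      have hcover : (g : X ≃ᵢ X) '' K ⊆
          {x : X | ∃ c', (x, c') ∈ Dset G K e i} ∪ (Set.range A ∪ Set.range B) := by
        intro x hx
        by_contra hxn
        rw [Set.mem_union] at hxn
        push_neg at hxn
        refine hs x hx ⟨?_, ?_⟩
        · intro c' hc'
          exact hxn.1 ⟨c', hc'⟩
        · intro q c' hqc hlnk hceq
          have hqQ : (q, k) ∈ Dset G K e i := hceq ▸ hqc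
          have h2 := hAB ⟨q, hqQ⟩ ⟨hx, hlnk⟩
          simp only [Set.mem_insert_iff, Set.mem_singleton_iff] at h2
          rcases h2 with h1 | h1
          · exact hxn.2 (Or.inl ⟨⟨q, hqQ⟩, h1.symm⟩)
          · exact hxn.2 (Or.inr ⟨⟨q, hqQ⟩, h1.symm⟩)
      have hle : Cardinal.mk ↥((g : X ≃ᵢ X) '' K) ≤ Cardinal.mk
          ↥({x : X | ∃ c', (x, c') ∈ Dset G K e i} ∪ (Set.range A ∪ Set.range B) : Set X) :=
        Cardinal.mk_le_mk_of_subset hcover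
      rw [Cardinal.mk_image_eq (g : X ≃ᵢ X).injective] at hle
      have hlt : Cardinal.mk
          ↥({x : X | ∃ c', (x, c') ∈ Dset G K e i} ∪ (Set.range A ∪ Set.range B) : Set X) <
          Cardinal.mk ↥K :=
        lt_of_le_of_lt (Cardinal.mk_union_le _ _) (Cardinal.add_lt_of_lt hκ hDomlt hRlt)
      exact absurd (hle.trans_lt hlt) (lt_irrefl _)

end Stmt13

theorem stmt13 {X : Type u} [MetricSpace X] (G : Subgroup (X ≃ᵢ X))
    (K : Set X) (hinf : K.Infinite) (hGK : Cardinal.mk G ≤ Cardinal.mk K)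
    (hrigid : Rigid K) :
    ∃ (C : Type u) (χ : X → C), Cardinal.mk C = Cardinal.mk K ∧ Function.Surjective χ ∧
      ∀ g : G, Set.BijOn χ ((g : X ≃ᵢ X) '' K) Set.univ := by
  classical
  haveI := hinf.to_subtype
  have hκ : Cardinal.aleph0 ≤ Cardinal.mk ↥K := Cardinal.aleph0_le_mk _
  obtain ⟨c0, hc0⟩ := hinf.nonempty
  haveI : Nonempty (Stmt13.Task G K) := ⟨Sum.inr (1, ⟨c0, hc0⟩)⟩
  have hT : Cardinal.mk (Stmt13.Task G K) ≤ Cardinal.mk ((Cardinal.mk ↥K).ord.ToType) := by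
    rw [Cardinal.mk_ord_toType]
    have hGK2 : Cardinal.mk (↥G × ↥K) ≤ Cardinal.mk ↥K := by
      rw [Cardinal.mk_prod, Cardinal.lift_id, Cardinal.lift_id]
      calc Cardinal.mk ↥G * Cardinal.mk ↥K ≤ Cardinal.mk ↥K * Cardinal.mk ↥K :=
            mul_le_mul_left hGK _
        _ = Cardinal.mk ↥K := Cardinal.mul_eq_self hκ
    have hY : Cardinal.mk ↥(⋃ g : G, (g : X ≃ᵢ X) '' K) ≤ Cardinal.mk (↥G × ↥K) := by
      have hsub : (⋃ g : G, (g : X ≃ᵢ X) '' K) ⊆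
          Set.range (fun p : ↥G × ↥K => (p.1 : X ≃ᵢ X) p.2) := by
        intro x hx
        rw [Set.mem_iUnion] at hx
        obtain ⟨g, y, hy, rfl⟩ := hx
        exact ⟨(g, ⟨y, hy⟩), rfl⟩
      exact (Cardinal.mk_le_mk_of_subset hsub).trans Cardinal.mk_range_le
    calc Cardinal.mk (Stmt13.Task G K)
        = Cardinal.mk ↥(⋃ g : G, (g : X ≃ᵢ X) '' K) + Cardinal.mk (↥G × ↥K) := by
          rw [Cardinal.mk_sum, Cardinal.lift_id, Cardinal.lift_id]
      _ ≤ Cardinal.mk ↥K + Cardinal.mk ↥K := add_le_add (hY.trans hGK2) hGK2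
      _ = Cardinal.mk ↥K := Cardinal.add_eq_self hκ
  obtain ⟨f⟩ := (Cardinal.le_def _ _).1 hT
  set e : (Cardinal.mk ↥K).ord.ToType → Stmt13.Task G K := Function.invFun f with hedef
  have hesurj : Function.Surjective e := Function.invFun_surjective f.injective
  have hsmall : ∀ i : (Cardinal.mk ↥K).ord.ToType,
      Cardinal.mk (Stmt13.Dset G K e i) < Cardinal.mk ↥K := by
    intro i
    have h1 : Cardinal.mk (Stmt13.Dset G K e i) ≤ Cardinal.mk ↥(Set.Iio i) := by
      refine Cardinal.mk_le_of_injective (f := fun pc : ↥(Stmt13.Dset G K e i) =>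
        (⟨pc.2.choose, pc.2.choose_spec.choose⟩ : ↥(Set.Iio i))) ?_
      intro a b hab
      apply Subtype.ext
      have ha := a.2.choose_spec.choose_spec
      have hb := b.2.choose_spec.choose_spec
      replace hab : a.2.choose = b.2.choose := congrArg Subtype.val hab
      rw [hab] at ha
      rw [ha] at hb
      exact Option.some.inj hb
    exact h1.trans_lt (Cardinal.mk_Iio_ord_toType i)
  set χ := Stmt13.chi G K e ⟨c0, hc0⟩ with hχ
  have hcolored : ∀ p, p ∈ (⋃ g : G, (g : X ≃ᵢ X) '' K) →
      ∃ j c, Stmt13.step G K e j = some (p, c) := by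
    intro p hp
    obtain ⟨i, hi⟩ := hesurj (Sum.inl ⟨p, hp⟩)
    exact Stmt13.point_colored G K hi (hsmall i)
  have hbij : ∀ g : G, Set.BijOn χ ((g : X ≃ᵢ X) '' K) Set.univ := by
    intro g
    refine ⟨fun x _ => Set.mem_univ _, ?_, ?_⟩
    · intro x hx y hy hxy
      by_contra hne
      obtain ⟨jx, cx, hjx⟩ := hcolored x (Set.mem_iUnion.2 ⟨g, hx⟩)
      obtain ⟨jy, cy, hjy⟩ := hcolored y (Set.mem_iUnion.2 ⟨g, hy⟩)
      have hcxy : cx = cy := by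
        have h1 : χ x = cx := Stmt13.chi_eq G K hjx
        have h2 : χ y = cy := Stmt13.chi_eq G K hjy
        rw [← h1, ← h2, hxy]
      subst hcxy
      rcases lt_trichotomy jx jy with h | h | h
      · exact (Stmt13.step_mem_safe G K hjy).2 x cx ⟨jx, h, hjx⟩ ⟨g, hy, hx⟩ rfl
      · subst h
        rw [hjx] at hjy
        exact hne (congrArg Prod.fst (Option.some.inj hjy))
      · exact (Stmt13.step_mem_safe G K hjx).2 y cx ⟨jy, h, hjy⟩ ⟨g, hx, hy⟩ rfl
    · intro c _
      obtain ⟨i, hi⟩ := hesurj (Sum.inr (g, c))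
      obtain ⟨x, hxg, j, hj⟩ := Stmt13.color_hit G K hi (hsmall i) hinf hrigid
      exact ⟨x, hxg, Stmt13.chi_eq G K hj⟩
  refine ⟨↥K, χ, rfl, ?_, hbij⟩
  intro c
  obtain ⟨x, _, hx⟩ := (hbij 1).2.2 (Set.mem_univ c)
  exact ⟨x, hx⟩
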